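/- Let V be a real inner product space and let J be a metallic structure on V with parameters p, q ∈ ℝ that is symmetric with respect to the inner product (⟨J X, Y⟩ = ⟨X, J Y⟩ for all X, Y). Define the endomorphism Ĵ of V × V* (where V* is the dual space of V) by Ĵ(X, α) := (J X, ♭(X) + p•α - α ∘ J), where ♭ : V → V* is the map ♭(X) = ⟨X, ·⟩. Then Ĵ is a metallic structure on V × V* with the same parameters, i.e. Ĵ ∘ Ĵ = p•Ĵ + q•id. -/

import Mathlib

open RealInnerProductSpace

/-- The musical isomorphism `♭ : V → V*`, `♭(X) = ⟨X, ·⟩`, of a real inner product space. -/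
noncomputable def flatMap (V : Type*) [NormedAddCommGroup V] [InnerProductSpace ℝ V] :
    V →ₗ[ℝ] Module.Dual ℝ V :=
  innerₗ V

/-- The generalized metallic structure `Ĵ` on `V × V*` induced by `(J, ⟨·,·⟩)`:
`Ĵ(X, α) = (J X, ♭(X) + p • α - α ∘ J)`. -/
noncomputable def genMetallic (V : Type*) [NormedAddCommGroup V] [InnerProductSpace ℝ V]
    (J : V →ₗ[ℝ] V) (p : ℝ) :
    (V × Module.Dual ℝ V) →ₗ[ℝ] (V × Module.Dual ℝ V) where
  toFun Xα := (J Xα.1, flatMap V Xα.1 + p • Xα.2 - Xα.2 ∘ₗ J)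
  map_add' x y := by
    refine Prod.ext (by simp) ?_
    simp only [Prod.fst_add, Prod.snd_add, map_add, smul_add, LinearMap.add_comp]
    abel
  map_smul' c x := by
    refine Prod.ext (by simp) ?_
    simp only [Prod.smul_fst, Prod.smul_snd, map_smul, LinearMap.smul_comp,
      RingHom.id_apply, smul_sub, smul_add]
    rw [smul_comm c p]

/-- Let `V` be a real inner product space and `J` a metallic structure on
`V` with parameters `p, q` (i.e. `J ∘ J = p • J + q • id`) symmetric with respect to the
inner product.  Then `Ĵ(X, α) := (J X, ♭(X) + p • α - α ∘ J)` is a metallic structure on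
`V × V*` with the same parameters: `Ĵ ∘ Ĵ = p • Ĵ + q • id`. -/
theorem genMetallic_is_metallic
    (V : Type*) [NormedAddCommGroup V] [InnerProductSpace ℝ V]
    (p q : ℝ) (J : V →ₗ[ℝ] V)
    (hJ : J ∘ₗ J = p • J + q • (LinearMap.id : V →ₗ[ℝ] V))
    (hJsymm : ∀ X Y : V, ⟪J X, Y⟫ = ⟪X, J Y⟫) :
    genMetallic V J p ∘ₗ genMetallic V J p =
      p • genMetallic V J p +
        q • (LinearMap.id : (V × Module.Dual ℝ V) →ₗ[ℝ] (V × Module.Dual ℝ V)) := by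
  apply LinearMap.ext; intro Xα
  obtain ⟨X, α⟩ := Xα
  have hflat : flatMap V (J X) = (flatMap V X) ∘ₗ J := by
    apply LinearMap.ext; intro Y
    simpa [flatMap] using hJsymm X Y
  have hJJ : ∀ Y, J (J Y) = p • J Y + q • Y := fun Y => by
    have := LinearMap.congr_fun hJ Y; simpa using this
  refine Prod.ext ?_ ?_
  · simp [genMetallic, hJJ]
  · apply LinearMap.ext; intro Y
    simp only [genMetallic, LinearMap.coe_mk, AddHom.coe_mk, LinearMap.coe_comp,
      Function.comp_apply, LinearMap.add_apply, LinearMap.smul_apply, LinearMap.id_apply,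
      Prod.snd_add, Prod.smul_snd, hflat, LinearMap.sub_apply, LinearMap.sub_comp,
      LinearMap.add_comp, LinearMap.smul_comp, smul_sub, smul_add]
    have : α (J (J Y)) = p * α (J Y) + q * α Y := by rw [hJJ]; simp
    simp [LinearMap.comp_apply, this]
    ring
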